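/- arXiv:1409.4279 — 2 statements merged into one kernel-verified Lean document; each statement's English description precedes it below -/
import Mathlib

section
/- Let Q ∈ ℝ^{n×m} have orthonormal columns (QᵀQ = Iₘ), let δ ∈ [0,1] satisfy the principal-angle bound for sparsity level s with δ² < 1/2, and let S ⊆ {1,…,n} with 1 ≤ |S| = k ≤ s. Then the k×k matrix M = I_k − I_Sᵀ Q Qᵀ I_S is invertible and satisfies ‖M⁻¹ x‖₂ ≤ (1 − δ²)⁻¹ ‖x‖₂ < 2 ‖x‖₂ for every x ∈ ℝᵏ. -/
open Matrix

/-- Euclidean (ℓ₂) norm of a finitely-indexed real vector. -/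
noncomputable def norm2 {ι : Type*} [Fintype ι] (v : ι → ℝ) : ℝ :=
  Real.sqrt (∑ i, v i ^ 2)

/-- A vector of `ℝⁿ` is `s`-sparse if it has at most `s` nonzero entries. -/
def Sparse {n : ℕ} (s : ℕ) (v : Fin n → ℝ) : Prop :=
  ∃ T : Finset (Fin n), T.card ≤ s ∧ ∀ i ∉ T, v i = 0

/-- `δ` satisfies the principal-angle bound for `Q` at sparsity level `s`:
`|⟨Qw, v⟩| ≤ δ ‖Qw‖₂ ‖v‖₂` for every `w` and every `s`-sparse `v`. -/
def PABound {n m : ℕ} (Q : Matrix (Fin n) (Fin m) ℝ) (s : ℕ) (δ : ℝ) : Prop :=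
  ∀ (w : Fin m → ℝ) (v : Fin n → ℝ), Sparse s v →
    |Q.mulVec w ⬝ᵥ v| ≤ δ * norm2 (Q.mulVec w) * norm2 v

/-- The `n × |S|` matrix `I_S` whose columns are the standard basis vectors `e_j`, `j ∈ S`. -/
def colSel {n : ℕ} (S : Finset (Fin n)) : Matrix (Fin n) {i // i ∈ S} ℝ :=
  Matrix.of fun i j => if i = (j : Fin n) then 1 else 0

/-- `F_S(a) = I_S I_Sᵀ a`: the vector agreeing with `a` on `S` and zero elsewhere. -/
def restrictVec {n : ℕ} (S : Finset (Fin n)) (a : Fin n → ℝ) : Fin n → ℝ :=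
  fun i => if i ∈ S then a i else 0

lemma norm2_sq {ι : Type*} [Fintype ι] (v : ι → ℝ) : norm2 v = Real.sqrt (v ⬝ᵥ v) := by
  unfold norm2 dotProduct
  congr 1
  exact Finset.sum_congr rfl fun i _ => sq (v i)

lemma dot_nonneg {ι : Type*} [Fintype ι] (v : ι → ℝ) : 0 ≤ v ⬝ᵥ v :=
  Finset.sum_nonneg fun i _ => mul_self_nonneg _

lemma colSel_mulVec {n : ℕ} (S : Finset (Fin n)) (y : {i // i ∈ S} → ℝ) (i : Fin n) :
    (colSel S).mulVec y i = if h : i ∈ S then y ⟨i, h⟩ else 0 := by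
  unfold mulVec dotProduct colSel
  by_cases h : i ∈ S
  · rw [dif_pos h]
    rw [Finset.sum_eq_single (⟨i, h⟩ : {i // i ∈ S})]
    · simp
    · intro b _ hb
      simp only [of_apply]
      rw [if_neg, zero_mul]
      intro hib
      exact hb (by aesop)
    · simp
  · rw [dif_neg h]
    apply Finset.sum_eq_zero
    intro b _
    simp only [of_apply]
    rw [if_neg, zero_mul]
    intro hib
    exact h (hib ▸ b.2)

lemma colSel_dot {n : ℕ} (S : Finset (Fin n)) (y : {i // i ∈ S} → ℝ) :
    (colSel S).mulVec y ⬝ᵥ (colSel S).mulVec y = y ⬝ᵥ y := by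
  unfold dotProduct
  rw [← Finset.sum_subset (Finset.subset_univ S)]
  · rw [← Finset.sum_attach S (fun i => (colSel S).mulVec y i * (colSel S).mulVec y i)]
    apply Finset.sum_congr rfl
    intro j _
    rw [colSel_mulVec, dif_pos j.2]
  · intro i _ hi
    rw [colSel_mulVec, dif_neg hi, mul_zero]

/-- If `δ² < 1/2`, the matrix `M = I_k − I_Sᵀ Q Qᵀ I_S` is invertible, with
`‖M⁻¹ x‖₂ ≤ (1 − δ²)⁻¹ ‖x‖₂` for every `x`, and `(1 − δ²)⁻¹ < 2`. -/
theorem stmt6 {n m s : ℕ} (Q : Matrix (Fin n) (Fin m) ℝ) (hQ : Qᵀ * Q = 1)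
    (δ : ℝ) (hδ0 : 0 ≤ δ) (hδ1 : δ ≤ 1) (hPA : PABound Q s δ) (hδ2 : δ ^ 2 < 1 / 2)
    (S : Finset (Fin n)) (hSne : S.Nonempty) (hcard : S.card ≤ s)
    (M : Matrix {i // i ∈ S} {i // i ∈ S} ℝ)
    (hM : M = 1 - (colSel S)ᵀ * Q * Qᵀ * colSel S) :
    IsUnit M ∧
      (∀ x : {i // i ∈ S} → ℝ, norm2 ((M⁻¹).mulVec x) ≤ (1 - δ ^ 2)⁻¹ * norm2 x) ∧
      (1 - δ ^ 2)⁻¹ < 2 := by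
  have hc : (0:ℝ) < 1 - δ ^ 2 := by nlinarith
  -- coercivity
  have key : ∀ y : {i // i ∈ S} → ℝ, (1 - δ ^ 2) * (y ⬝ᵥ y) ≤ M.mulVec y ⬝ᵥ y := by
    intro y
    set v : Fin n → ℝ := (colSel S).mulVec y with hv
    set w : Fin m → ℝ := Qᵀ.mulVec v with hw
    have hvs : Sparse s v := by
      refine ⟨S, hcard, fun i hi => ?_⟩
      rw [hv, colSel_mulVec, dif_neg hi]
    -- (Q w) ⬝ v = w ⬝ w
    have h1 : Q.mulVec w ⬝ᵥ v = w ⬝ᵥ w := by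
      rw [dotProduct_comm, dotProduct_mulVec, ← mulVec_transpose, hw, dotProduct_comm]
    -- ‖Qw‖² = w ⬝ w
    have h2 : Q.mulVec w ⬝ᵥ Q.mulVec w = w ⬝ᵥ w := by
      rw [dotProduct_comm, dotProduct_mulVec, ← mulVec_transpose, mulVec_mulVec, hQ,
        one_mulVec]
    -- PA bound gives w⬝w ≤ δ² (v⬝v)
    have hPA' := hPA w v hvs
    rw [h1, abs_of_nonneg (dot_nonneg w), norm2_sq, norm2_sq, h2] at hPA'
    have hww : w ⬝ᵥ w ≤ δ ^ 2 * (v ⬝ᵥ v) := by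
      rcases eq_or_lt_of_le (dot_nonneg w) with h0 | h0
      · nlinarith [dot_nonneg v]
      · have ha := Real.sq_sqrt (dot_nonneg w)
        have hb := Real.sq_sqrt (dot_nonneg v)
        have hapos : 0 < Real.sqrt (w ⬝ᵥ w) := Real.sqrt_pos.2 h0
        have hab : Real.sqrt (w ⬝ᵥ w) ≤ δ * Real.sqrt (v ⬝ᵥ v) := by nlinarith
        calc w ⬝ᵥ w = Real.sqrt (w ⬝ᵥ w) ^ 2 := ha.symm
          _ ≤ (δ * Real.sqrt (v ⬝ᵥ v)) ^ 2 := pow_le_pow_left₀ hapos.le hab 2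
          _ = δ ^ 2 * (v ⬝ᵥ v) := by rw [mul_pow, hb]
    -- compute M y ⬝ y
    have h3 : M.mulVec y ⬝ᵥ y = y ⬝ᵥ y - Q.mulVec w ⬝ᵥ v := by
      rw [hM, sub_mulVec, sub_dotProduct, one_mulVec]
      congr 1
      rw [← mulVec_mulVec, ← mulVec_mulVec, ← mulVec_mulVec, ← hv, ← hw]
      rw [mulVec_transpose, ← dotProduct_mulVec, ← hv, dotProduct_comm]
    rw [h3, h1]
    have := colSel_dot S y
    rw [← hv] at this
    nlinarith
  have hzero : ∀ y : {i // i ∈ S} → ℝ, M.mulVec y = 0 → y = 0 := by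
    intro y hy
    have := key y
    rw [hy, zero_dotProduct] at this
    have : y ⬝ᵥ y = 0 := le_antisymm (by nlinarith) (dot_nonneg y)
    exact dotProduct_self_eq_zero.mp this
  have hunit : IsUnit M := by
    rw [← Matrix.mulVec_injective_iff_isUnit]
    intro a b hab
    have : M.mulVec (a - b) = 0 := by rw [mulVec_sub, hab, sub_self]
    have := hzero _ this
    exact sub_eq_zero.mp this
  refine ⟨hunit, ?_, by rw [inv_lt_iff_one_lt_mul₀ hc]; nlinarith⟩
  intro x
  set y := (M⁻¹).mulVec x with hy
  have hMy : M.mulVec y = x := by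
    rw [hy, mulVec_mulVec, Matrix.mul_nonsing_inv M ((Matrix.isUnit_iff_isUnit_det M).mp hunit),
      one_mulVec]
  have hCS : x ⬝ᵥ y ≤ norm2 x * norm2 y := by
    have h := Finset.sum_mul_sq_le_sq_mul_sq Finset.univ x y
    have hx2 : (0:ℝ) ≤ ∑ i, x i ^ 2 := Finset.sum_nonneg fun i _ => sq_nonneg _
    have hy2 : (0:ℝ) ≤ ∑ i, y i ^ 2 := Finset.sum_nonneg fun i _ => sq_nonneg _
    unfold norm2
    calc x ⬝ᵥ y ≤ |x ⬝ᵥ y| := le_abs_self _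
    _ ≤ Real.sqrt ((∑ i, x i ^ 2) * ∑ i, y i ^ 2) := by
        rw [← Real.sqrt_sq_eq_abs]
        exact Real.sqrt_le_sqrt (by simpa [dotProduct] using h)
    _ = _ := Real.sqrt_mul hx2 _
  have hkey := key y
  rw [hMy] at hkey
  have hny : norm2 y ^ 2 = y ⬝ᵥ y := by rw [norm2_sq]; exact Real.sq_sqrt (dot_nonneg y)
  have hny0 : 0 ≤ norm2 y := Real.sqrt_nonneg _
  rcases eq_or_lt_of_le hny0 with h0 | h0
  · rw [← h0]
    have : 0 ≤ norm2 x := Real.sqrt_nonneg _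
    positivity
  · have h4 : (1 - δ ^ 2) * norm2 y ≤ norm2 x :=
      le_of_mul_le_mul_right (by nlinarith) h0
    calc norm2 y = (1 - δ ^ 2)⁻¹ * ((1 - δ ^ 2) * norm2 y) := by field_simp
      _ ≤ (1 - δ ^ 2)⁻¹ * norm2 x := by
          exact mul_le_mul_of_nonneg_left h4 (inv_nonneg.2 hc.le)
end

section
/- Restricted isometry lower bound from the principal angle: let Q ∈ ℝ^{n×m} have orthonormal columns (QᵀQ = Iₘ), let δ ∈ [0,1] satisfy the principal-angle bound for sparsity level s, and let S ⊆ {1,…,n} with |S| ≤ s. Then for every w ∈ ℝᵐ and every c ∈ ℝ^{|S|}, ‖Qw + I_S c‖₂² ≥ (1 − δ)(‖w‖₂² + ‖c‖₂²); in particular, every singular value of the matrix Φ = [Q I_S] is at least √(1 − δ). -/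
open Matrix

lemma norm2_sq_s7 {ι : Type*} [Fintype ι] (u : ι → ℝ) : norm2 u ^ 2 = ∑ i, u i ^ 2 := by
  rw [norm2, Real.sq_sqrt]; positivity

lemma norm2_nonneg {ι : Type*} [Fintype ι] (u : ι → ℝ) : 0 ≤ norm2 u :=
  Real.sqrt_nonneg _

lemma colSel_orth {n : ℕ} (S : Finset (Fin n)) : (colSel S)ᵀ * (colSel S) = 1 := by
  ext j k
  simp only [Matrix.mul_apply, Matrix.transpose_apply, colSel, Matrix.of_apply,
    Matrix.one_apply, ite_mul, one_mul, zero_mul]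
  rw [Finset.sum_ite_eq' (Finset.univ) (j : Fin n) (fun i => if i = (k : Fin n) then (1:ℝ) else 0)]
  simp [Subtype.val_inj]

/-- Restricted isometry lower bound from the principal angle: for `|S| ≤ s`,
`‖Qw + I_S c‖₂² ≥ (1 − δ)(‖w‖₂² + ‖c‖₂²)` for every `w` and `c`; in particular every
singular value of `[Q I_S]` is at least `√(1 − δ)`. -/
theorem stmt7 {n m s : ℕ} (Q : Matrix (Fin n) (Fin m) ℝ) (hQ : Qᵀ * Q = 1)
    (δ : ℝ) (hδ0 : 0 ≤ δ) (hδ1 : δ ≤ 1) (hPA : PABound Q s δ)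
    (S : Finset (Fin n)) (hcard : S.card ≤ s) :
    ∀ (w : Fin m → ℝ) (c : {i // i ∈ S} → ℝ),
      (1 - δ) * (norm2 w ^ 2 + norm2 c ^ 2)
        ≤ norm2 (Q.mulVec w + (colSel S).mulVec c) ^ 2 := by
  intro w c
  set x := Q.mulVec w with hxdef
  set v := (colSel S).mulVec c with hvdef
  -- ‖x‖² = ‖w‖²
  have hxx : x ⬝ᵥ x = w ⬝ᵥ w := by
    rw [hxdef, Matrix.dotProduct_mulVec]
    congr 1
    rw [show Q *ᵥ w = w ᵥ* Qᵀ from (Matrix.vecMul_transpose Q w).symm,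
      Matrix.vecMul_vecMul, hQ, Matrix.vecMul_one]
  -- ‖v‖² = ‖c‖²
  have hvv : v ⬝ᵥ v = c ⬝ᵥ c := by
    rw [hvdef, Matrix.dotProduct_mulVec]
    congr 1
    rw [show colSel S *ᵥ c = c ᵥ* (colSel S)ᵀ from (Matrix.vecMul_transpose _ c).symm,
      Matrix.vecMul_vecMul, colSel_orth, Matrix.vecMul_one]
  have hdp : ∀ {ι : Type} [Fintype ι] (u : ι → ℝ), u ⬝ᵥ u = ∑ i, u i ^ 2 := by
    intro ι _ u; simp [dotProduct, pow_two]
  have hsparse : Sparse s v := by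
    refine ⟨S, hcard, fun i hi => ?_⟩
    rw [hvdef]
    simp only [Matrix.mulVec, dotProduct, colSel, Matrix.of_apply]
    apply Finset.sum_eq_zero
    intro j _
    have : i ≠ (j : Fin n) := fun h => hi (h ▸ j.2)
    simp [this]
  have hbound := hPA w v hsparse
  rw [← hxdef] at hbound
  -- norms
  have hnx : norm2 x ^ 2 = ∑ i, x i ^ 2 := norm2_sq_s7 x
  have hnv : norm2 v ^ 2 = ∑ i, v i ^ 2 := norm2_sq_s7 v
  have hnw : norm2 w ^ 2 = ∑ i, w i ^ 2 := norm2_sq_s7 w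
  have hnc : norm2 c ^ 2 = ∑ i, c i ^ 2 := norm2_sq_s7 c
  have hxw : norm2 x ^ 2 = norm2 w ^ 2 := by rw [hnx, hnw, ← hdp, ← hdp, hxx]
  have hvc : norm2 v ^ 2 = norm2 c ^ 2 := by rw [hnv, hnc, ← hdp, ← hdp, hvv]
  have hexp : norm2 (x + v) ^ 2 = norm2 x ^ 2 + 2 * (x ⬝ᵥ v) + norm2 v ^ 2 := by
    rw [norm2_sq_s7, hnx, hnv]
    simp only [Pi.add_apply, dotProduct, Finset.mul_sum]
    rw [← Finset.sum_add_distrib, ← Finset.sum_add_distrib]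
    apply Finset.sum_congr rfl; intro i _; ring
  have habs : |x ⬝ᵥ v| ≤ δ * norm2 x * norm2 v := hbound
  have h1 : -(δ * norm2 x * norm2 v) ≤ x ⬝ᵥ v := neg_le_of_abs_le habs
  have hnxn : 0 ≤ norm2 x := norm2_nonneg x
  have hnvn : 0 ≤ norm2 v := norm2_nonneg v
  rw [hexp, hxw, hvc]
  nlinarith [sq_nonneg (norm2 x - norm2 v), hxw, hvc, sq_nonneg (norm2 x + norm2 v)]
end
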